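/- Fix β > 0 and an integer j ≥ 0, and set b = β(j+1)/2. Let γ = √X·e^{iΘ}, where X and Θ are independent, X has density x ↦ b·(1−x)^{b−1} on [0,1], and Θ is uniform on [0,2π). Then for all real s, t: E[ exp( t·Re γ + s·Im γ ) ] ≤ exp( (s² + t²) / (2·(1 + β(j+1))) ). -/

import Mathlib

open MeasureTheory Real intervalIntegral
open scoped Nat

lemma wallis_prod (k : ℕ) :
    ∏ i ∈ Finset.range k, (2*(i:ℝ)+1)/(2*i+2) = ((2*k)! : ℝ) / (4^k * (k !)^2) := by
  induction k with
  | zero => simp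
  | succ n ih =>
    rw [Finset.prod_range_succ, ih]
    have h1 : (2*(n+1)) = (2*n+1)+1 := by ring
    rw [h1, Nat.factorial_succ, Nat.factorial_succ, Nat.factorial_succ n]
    have h2 : ((2*n)! : ℝ) ≠ 0 := by positivity
    have h3 : ((n)! : ℝ) ≠ 0 := by positivity
    push_cast
    field_simp
    ring

lemma cos_pow_odd_int (k : ℕ) :
    ∫ θ in (0:ℝ)..(2*π), Real.cos θ ^ (2*k+1) = 0 := by
  have hc : ∀ a b : ℝ, IntervalIntegrable (fun θ => Real.cos θ ^ (2*k+1)) volume a b :=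
    fun a b => (Real.continuous_cos.pow _).intervalIntegrable a b
  have hsplit : ∫ θ in (0:ℝ)..(2*π), Real.cos θ ^ (2*k+1)
      = (∫ θ in (0:ℝ)..π, Real.cos θ ^ (2*k+1)) + ∫ θ in π..(2*π), Real.cos θ ^ (2*k+1) :=
    (integral_add_adjacent_intervals (hc 0 π) (hc π (2*π))).symm
  have hshift : ∫ θ in π..(2*π), Real.cos θ ^ (2*k+1)
      = ∫ θ in (0:ℝ)..π, Real.cos (θ + π) ^ (2*k+1) := by
    rw [integral_comp_add_right (fun θ => Real.cos θ ^ (2*k+1)) π]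
    norm_num [two_mul]
  have hneg : ∀ θ : ℝ, Real.cos (θ + π) ^ (2*k+1) = -(Real.cos θ ^ (2*k+1)) := by
    intro θ
    rw [Real.cos_add_pi, Odd.neg_pow ⟨k, by ring⟩]
  rw [hsplit, hshift]
  simp only [hneg, intervalIntegral.integral_neg]
  ring

lemma cos_pow_even_int (k : ℕ) :
    ∫ θ in (0:ℝ)..(2*π), Real.cos θ ^ (2*k) = 2*π*(((2*k)! : ℝ) / (4^k * (k !)^2)) := by
  have hper : Function.Periodic (fun θ => Real.sin θ ^ (2*k)) π := by
    intro θ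
    simp only [Real.sin_add_pi]
    rw [Even.neg_pow ⟨k, by ring⟩]
  have hc : ∀ a b : ℝ, IntervalIntegrable (fun θ => Real.sin θ ^ (2*k)) volume a b :=
    fun a b => (Real.continuous_sin.pow _).intervalIntegrable a b
  have h1 : ∫ θ in (0:ℝ)..(2*π), Real.cos θ ^ (2*k)
      = ∫ θ in (0:ℝ)..(2*π), (fun u => Real.sin u ^ (2*k)) (θ + π/2) := by
    refine integral_congr fun θ _ => ?_
    simp [Real.sin_add_pi_div_two]
  have h2 : ∫ θ in (0:ℝ)..(2*π), (fun u => Real.sin u ^ (2*k)) (θ + π/2)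
      = ∫ θ in (π/2)..(2*π + π/2), Real.sin θ ^ (2*k) := by
    rw [integral_comp_add_right (fun u => Real.sin u ^ (2*k)) (π/2)]
    norm_num
  have h3 : ∫ θ in (π/2)..(2*π+π/2), Real.sin θ ^ (2*k)
      = (2:ℤ) • ∫ θ in (π/2)..(π/2+π), Real.sin θ ^ (2*k) := by
    have := hper.intervalIntegral_add_zsmul_eq 2 (π/2) hc
    rw [← this]
    norm_num
    ring_nf
  have h4 : ∫ θ in (π/2)..(π/2+π), Real.sin θ ^ (2*k)
      = ∫ θ in (0:ℝ)..(0+π), Real.sin θ ^ (2*k) :=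
    hper.intervalIntegral_add_eq (π/2) 0
  rw [h1, h2, h3, h4]
  simp only [zero_add]
  rw [integral_sin_pow_even, wallis_prod]
  rw [zsmul_eq_mul]
  push_cast
  ring

lemma exists_phase (s t : ℝ) : ∃ ph : ℝ, ∀ θ : ℝ,
    t * Real.cos θ + s * Real.sin θ = Real.sqrt (s^2 + t^2) * Real.cos (θ - ph) := by
  by_cases h : (t = 0 ∧ s = 0)
  · exact ⟨0, fun θ => by simp [h.1, h.2]⟩
  · set z : ℂ := ⟨t, s⟩ with hz
    have hz0 : z ≠ 0 := by
      intro h0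
      rw [Complex.ext_iff] at h0
      simp only [hz, Complex.zero_re, Complex.zero_im] at h0
      exact h ⟨h0.1, h0.2⟩
    have habs : ‖z‖ = Real.sqrt (s^2 + t^2) := by
      rw [Complex.norm_def, Complex.normSq_mk]
      congr 1
      ring
    have hre : z.re = t := rfl
    have him : z.im = s := rfl
    have hcos : Real.cos z.arg = t / Real.sqrt (s^2+t^2) := by
      rw [Complex.cos_arg hz0, habs, hre]
    have hsin : Real.sin z.arg = s / Real.sqrt (s^2+t^2) := by
      rw [Complex.sin_arg, habs, him]
    have hr : Real.sqrt (s^2+t^2) ≠ 0 := by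
      intro h0
      rw [h0] at habs
      exact hz0 (norm_eq_zero.mp habs)
    refine ⟨z.arg, fun θ => ?_⟩
    rw [Real.cos_sub, hcos, hsin]
    field_simp


lemma hasSum_inner (a : ℝ) :
    HasSum (fun k : ℕ => (a^2)^k / (4^k * ((k !:ℝ))^2) * (2*π))
      (∫ θ in (0:ℝ)..(2*π), Real.exp (a * Real.cos θ)) := by
  have h2π : (0:ℝ) ≤ 2*π := by positivity
  set μ := volume.restrict (Set.Ioc (0:ℝ) (2*π)) with hμ
  set F : ℕ → ℝ → ℝ := fun n θ => (a * Real.cos θ)^n / n ! with hF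
  have hF_int : ∀ n, Integrable (F n) μ := by
    intro n
    exact ((continuous_const.mul Real.continuous_cos).pow n).div_const _ |>.integrableOn_Ioc
  have hconst_int : ∀ C : ℝ, Integrable (fun _ : ℝ => C) μ := by
    intro C
    exact integrableOn_const measure_Ioc_lt_top.ne
  have hF_norm : ∀ n, (∫ θ, ‖F n θ‖ ∂μ) ≤ |a|^n / n ! * (2*π) := by
    intro n
    have hb : ∀ θ : ℝ, ‖F n θ‖ ≤ |a|^n / n ! := by
      intro θ
      have h1 : ‖F n θ‖ = (|a| * |Real.cos θ|)^n / n ! := by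
        simp [hF, abs_div, abs_pow, Nat.abs_cast, abs_mul]
      have h2 : |a| * |Real.cos θ| ≤ |a| := by
        calc |a| * |Real.cos θ| ≤ |a| * 1 := by
              gcongr; exact Real.abs_cos_le_one θ
          _ = |a| := mul_one _
      rw [h1]
      gcongr
    calc (∫ θ, ‖F n θ‖ ∂μ) ≤ ∫ _, |a|^n / n ! ∂μ :=
          integral_mono (hF_int n).norm (hconst_int _) hb
      _ = (μ Set.univ).toReal * (|a|^n / n !) := by
          rw [MeasureTheory.integral_const, smul_eq_mul]
          rfl
      _ ≤ |a|^n / n ! * (2*π) := by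
          rw [hμ, Measure.restrict_apply_univ, Real.volume_Ioc,
            ENNReal.toReal_ofReal (by linarith), mul_comm]
          simp
  have hF_sum : Summable fun n => ∫ θ, ‖F n θ‖ ∂μ := by
    refine Summable.of_nonneg_of_le (fun n => integral_nonneg fun θ => norm_nonneg _)
      hF_norm ?_
    exact (Real.summable_pow_div_factorial |a|).mul_right _
  have hmain := hasSum_integral_of_summable_integral_norm hF_int hF_sum
  have htsum : ∀ θ : ℝ, ∑' n, F n θ = Real.exp (a * Real.cos θ) := by
    intro θ
    have := NormedSpace.expSeries_div_hasSum_exp (a * Real.cos θ)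
    rw [← Real.exp_eq_exp_ℝ] at this
    exact this.tsum_eq
  simp only [htsum] at hmain
  have hval : ∀ n : ℕ, (∫ θ, F n θ ∂μ) = a^n / n ! * ∫ θ in (0:ℝ)..(2*π), Real.cos θ ^ n := by
    intro n
    rw [intervalIntegral.integral_of_le h2π, ← MeasureTheory.integral_const_mul]
    refine integral_congr_ae (Filter.Eventually.of_forall fun θ => ?_)
    show (a * Real.cos θ)^n / n ! = a^n / n ! * Real.cos θ^n
    rw [mul_pow]
    ring
  rw [funext hval] at hmain
  have hmain2 : HasSum (fun n => a ^ n / n ! * ∫ θ in (0:ℝ)..(2*π), Real.cos θ ^ n)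
      (∫ θ in (0:ℝ)..(2*π), Real.exp (a * Real.cos θ)) := by
    rw [intervalIntegral.integral_of_le h2π]
    exact hmain
  have hinj : Function.Injective (fun k : ℕ => 2*k) := fun x y h => by dsimp at h; omega
  have hvanish : ∀ n, n ∉ Set.range (fun k : ℕ => 2*k) →
      a^n / n ! * (∫ θ in (0:ℝ)..(2*π), Real.cos θ ^ n) = 0 := by
    intro n hn
    simp only [Set.mem_range, not_exists] at hn
    rcases Nat.even_or_odd n with ⟨m, hm⟩ | ⟨m, hm⟩
    · exact absurd (by omega : 2*m = n) (hn m)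
    · rw [hm, cos_pow_odd_int, mul_zero]
  have hmain3 := (Function.Injective.hasSum_iff hinj hvanish).mpr hmain2
  have heq : (fun k : ℕ => (a^2)^k / (4^k * ((k !:ℝ))^2) * (2*π))
      = (fun k : ℕ => a ^ (2*k) / (2*k)! * ∫ θ in (0:ℝ)..(2*π), Real.cos θ ^ (2*k)) := by
    funext k
    rw [cos_pow_even_int, pow_mul]
    have h1 : ((2*k)! : ℝ) ≠ 0 := by positivity
    field_simp
  rw [heq]
  exact hmain3


lemma rot_integral (s t u : ℝ) :
    ∫ θ in (0:ℝ)..(2*π), Real.exp (t*(u*Real.cos θ) + s*(u*Real.sin θ))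
      = ∫ θ in (0:ℝ)..(2*π), Real.exp ((Real.sqrt (s^2+t^2) * u) * Real.cos θ) := by
  obtain ⟨ph, hph⟩ := exists_phase s t
  set r := Real.sqrt (s^2+t^2) with hr
  have hper : Function.Periodic (fun y => Real.exp ((r*u) * Real.cos y)) (2*π) := by
    intro y
    simp [Real.cos_add_two_pi]
  calc ∫ θ in (0:ℝ)..(2*π), Real.exp (t*(u*Real.cos θ) + s*(u*Real.sin θ))
      = ∫ θ in (0:ℝ)..(2*π), (fun y => Real.exp ((r*u) * Real.cos y)) (θ - ph) := by
        refine integral_congr fun θ _ => ?_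
        have h := hph θ
        simp only []
        congr 1
        linear_combination u * hph θ
    _ = ∫ θ in (0-ph)..(2*π-ph), Real.exp ((r*u) * Real.cos θ) :=
        integral_comp_sub_right (fun y => Real.exp ((r*u) * Real.cos y)) ph
    _ = ∫ θ in (0:ℝ)..(2*π), Real.exp ((r*u) * Real.cos θ) := by
        have := hper.intervalIntegral_add_eq (0-ph) 0
        rw [show (0:ℝ)-ph+2*π = 2*π-ph by ring, zero_add] at this
        exact this
    _ = ∫ θ in (0:ℝ)..(2*π), Real.exp ((r * u) * Real.cos θ) := rfl

lemma alt_sum : ∀ (k : ℕ) (b : ℝ), 0 < b →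
    ∑ m ∈ Finset.range (k+1), (-1:ℝ)^m * (k.choose m) * (1/(b+m)) =
      (k ! : ℝ) / ∏ i ∈ Finset.range (k+1), (b+i) := by
  intro k
  induction k with
  | zero => intro b hb; simp
  | succ k ih =>
    intro b hb
    have hb1 : (0:ℝ) < b + 1 := by linarith
    have hsplit : ∑ m ∈ Finset.range (k+2), (-1:ℝ)^m * ((k+1).choose m) * (1/(b+m))
        = (∑ i ∈ Finset.range (k+1), (-1:ℝ)^(i+1) * ((k+1).choose (i+1)) * (1/(b+(i+1)))) + 1/b := by
      rw [Finset.sum_range_succ' (fun m => (-1:ℝ)^m * ((k+1).choose m) * (1/(b+m))) (k+1)]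
      simp
    have hpascal : ∀ i : ℕ, (-1:ℝ)^(i+1) * ((k+1).choose (i+1)) * (1/(b+(i+1)))
        = -((-1:ℝ)^i * (k.choose i) * (1/((b+1)+i)))
          + (-1:ℝ)^(i+1) * (k.choose (i+1)) * (1/(b+(i+1))) := by
      intro i
      rw [Nat.choose_succ_succ]
      push_cast
      have : b + (↑i+1) = (b+1)+↑i := by ring
      rw [this]
      ring
    have hT : ∑ i ∈ Finset.range (k+1), (-1:ℝ)^(i+1) * (k.choose (i+1)) * (1/(b+(i+1)))
        = (∑ m ∈ Finset.range (k+1), (-1:ℝ)^m * (k.choose m) * (1/(b+m))) - 1/b := by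
      have h1 := Finset.sum_range_succ' (fun m => (-1:ℝ)^m * (k.choose m) * (1/(b+m))) (k+1)
      have h2 := Finset.sum_range_succ (fun m => (-1:ℝ)^m * (k.choose m) * (1/(b+m))) (k+1)
      rw [h2, Nat.choose_succ_self] at h1
      simp only [Nat.cast_zero, pow_zero, Nat.choose_zero_right, Nat.cast_one, add_zero,
        Nat.cast_ofNat, one_mul, mul_one] at h1 ⊢
      push_cast at h1
      linarith [h1]
    have hstep : ∑ m ∈ Finset.range (k+2), (-1:ℝ)^m * ((k+1).choose m) * (1/(b+m))
        = (∑ m ∈ Finset.range (k+1), (-1:ℝ)^m * (k.choose m) * (1/(b+m)))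
          - ∑ i ∈ Finset.range (k+1), (-1:ℝ)^i * (k.choose i) * (1/((b+1)+i)) := by
      rw [hsplit]
      rw [Finset.sum_congr rfl (fun i _ => hpascal i), Finset.sum_add_distrib, Finset.sum_neg_distrib]
      rw [hT]
      ring
    have hib := ih b hb
    have hib1 := ih (b+1) hb1
    rw [hstep, hib, hib1]
    -- now pure algebra
    have hP1 : (0:ℝ) < ∏ i ∈ Finset.range (k+1), (b+i) :=
      Finset.prod_pos fun i _ => by positivity
    have hP2 : (0:ℝ) < ∏ i ∈ Finset.range (k+1), ((b+1)+i) :=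
      Finset.prod_pos fun i _ => by positivity
    have hQ : b * ∏ i ∈ Finset.range (k+1), ((b+1)+i)
        = (∏ i ∈ Finset.range (k+1), (b+i)) * (b+(k+1)) := by
      have e1 : ∏ i ∈ Finset.range (k+2), (b+(i:ℝ))
          = (∏ i ∈ Finset.range (k+1), (b+((i:ℕ)+1:ℕ))) * (b+(0:ℕ)) :=
        Finset.prod_range_succ' (fun i => (b+(i:ℝ))) (k+1)
      have e2 : ∏ i ∈ Finset.range (k+2), (b+(i:ℝ))
          = (∏ i ∈ Finset.range (k+1), (b+i)) * (b+((k+1:ℕ):ℝ)) :=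
        Finset.prod_range_succ (fun i => (b+(i:ℝ))) (k+1)
      have e3 : ∏ i ∈ Finset.range (k+1), (b+(((i:ℕ)+1:ℕ):ℝ)) = ∏ i ∈ Finset.range (k+1), ((b+1)+i) := by
        refine Finset.prod_congr rfl fun i _ => by push_cast; ring
      rw [e3] at e1
      rw [e1] at e2
      push_cast at e2 ⊢
      linear_combination e2
    have h3 : (0:ℝ) < b + ((k:ℝ)+1) := by positivity
    have target : ∏ i ∈ Finset.range (k+2), (b+(i:ℝ)) = (∏ i ∈ Finset.range (k+1), (b+i)) * (b+((k:ℝ)+1)) := by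
      have := Finset.prod_range_succ (fun i => (b+(i:ℝ))) (k+1)
      push_cast at this ⊢
      linarith [this]
    rw [target]
    have e1 : ((k !:ℝ))/(∏ i ∈ Finset.range (k+1), (b+i))
        = ((k !:ℝ) * (b+((k:ℝ)+1)))/((∏ i ∈ Finset.range (k+1), (b+i))*(b+((k:ℝ)+1))) :=
      (mul_div_mul_right _ _ h3.ne').symm
    have e2 : ((k !:ℝ))/(∏ i ∈ Finset.range (k+1), ((b+1)+i))
        = (b * (k !:ℝ))/((∏ i ∈ Finset.range (k+1), (b+i))*(b+((k:ℝ)+1))) := by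
      rw [← hQ]
      exact (mul_div_mul_left _ _ hb.ne').symm
    rw [e1, e2, div_sub_div_same]
    congr 1
    push_cast [Nat.factorial_succ]
    ring

lemma moment_int (b : ℝ) (hb : 0 < b) (k : ℕ) :
    ∫ x in (0:ℝ)..1, x^k * (1-x)^(b-1) = (k ! : ℝ) / ∏ i ∈ Finset.range (k+1), (b+i) := by
  have hrefl : ∫ x in (0:ℝ)..1, x^k * (1-x)^(b-1)
      = ∫ u in (0:ℝ)..1, (1-u)^k * u^(b-1) := by
    have h := intervalIntegral.integral_comp_sub_left (a := 0) (b := 1) (fun x : ℝ => x^k * (1-x)^(b-1)) 1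
    norm_num at h
    rw [← h]
  rw [hrefl]
  have key : ∀ m : ℕ, ∫ u in (0:ℝ)..1, u^m * u^(b-1) = 1/(b+m) := by
    intro m
    have hcong : ∀ u ∈ Set.uIcc (0:ℝ) 1, u^m * u^(b-1) = u^(b-1+m) := by
      intro u hu
      rw [Set.uIcc_of_le (by norm_num : (0:ℝ) ≤ 1)] at hu
      rcases eq_or_lt_of_le hu.1 with heq | hpos
      · subst heq
        rcases Nat.eq_zero_or_pos m with hm | hm
        · subst hm; norm_num
        · rw [zero_pow (by omega : m ≠ 0), zero_mul,
            Real.zero_rpow (ne_of_gt (by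
              have h1 : (1:ℝ) ≤ (m:ℝ) := by exact_mod_cast hm
              linarith))]
      · rw [← Real.rpow_natCast u m, ← Real.rpow_add hpos]
        rw [show (m:ℝ) + (b-1) = b-1+m by ring]
    rw [integral_congr hcong, integral_rpow (Or.inl (by push_cast; linarith : (-1:ℝ) < b-1+m))]
    rw [Real.one_rpow, Real.zero_rpow (ne_of_gt (by
      have h1 : (0:ℝ) ≤ (m:ℝ) := Nat.cast_nonneg m
      linarith))]
    rw [show b-1+(m:ℝ)+1 = b+m by ring]
    norm_num
  have hexp : ∀ u : ℝ, (1-u)^k * u^(b-1)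
      = ∑ m ∈ Finset.range (k+1), ((-1:ℝ)^m * (k.choose m)) * (u^m * u^(b-1)) := by
    intro u
    rw [show (1:ℝ)-u = -u + 1 by ring, add_pow, Finset.sum_mul]
    refine Finset.sum_congr rfl fun m _ => ?_
    rw [neg_pow]
    ring
  have hint : ∀ m : ℕ, IntervalIntegrable (fun u : ℝ => u^m * u^(b-1)) volume 0 1 := by
    intro m
    have h1 : IntervalIntegrable (fun u : ℝ => u^(b-1)) volume 0 1 :=
      intervalIntegral.intervalIntegrable_rpow' (by linarith)
    exact h1.continuousOn_mul (Continuous.continuousOn (continuous_pow m))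
  calc ∫ u in (0:ℝ)..1, (1-u)^k * u^(b-1)
      = ∫ u in (0:ℝ)..1, ∑ m ∈ Finset.range (k+1), ((-1:ℝ)^m * (k.choose m)) * (u^m*u^(b-1)) :=
        integral_congr fun u _ => hexp u
    _ = ∑ m ∈ Finset.range (k+1), ∫ u in (0:ℝ)..1, ((-1:ℝ)^m * (k.choose m)) * (u^m*u^(b-1)) :=
        intervalIntegral.integral_finset_sum fun m _ => (hint m).const_mul _
    _ = ∑ m ∈ Finset.range (k+1), ((-1:ℝ)^m * (k.choose m)) * (1/(b+m)) := by
        refine Finset.sum_congr rfl fun m _ => ?_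
        rw [intervalIntegral.integral_const_mul, key m]
    _ = (k ! : ℝ) / ∏ i ∈ Finset.range (k+1), (b+i) := by
        rw [← alt_sum k b hb]

/-- The expectation `E[F(γ)]` where `γ = √X e^{iΘ}`, `X` has density
`x ↦ b (1−x)^{b−1}` on `[0,1]` and `Θ` is uniform on `[0,2π)`, independent:
`∫₀¹ ∫₀^{2π} F(√x e^{iθ}) (b/(2π)) (1−x)^{b−1} dθ dx`. -/
noncomputable def verblunskyExp (b : ℝ) (F : ℂ → ℝ) : ℝ :=
  ∫ x in Set.Icc (0:ℝ) 1, ∫ θ in Set.Ico (0:ℝ) (2 * Real.pi),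
    F ((Real.sqrt x : ℂ) * Complex.exp (Complex.I * (θ : ℝ))) *
      (b / (2 * Real.pi) * (1 - x) ^ (b - 1))


lemma gamma_re_im (u θ : ℝ) : ((u:ℂ) * Complex.exp (Complex.I * (θ:ℂ))).re = u * Real.cos θ ∧
    ((u:ℂ) * Complex.exp (Complex.I * (θ:ℂ))).im = u * Real.sin θ := by
  rw [mul_comm Complex.I (θ:ℂ), Complex.exp_mul_I]
  constructor <;>
    simp [Complex.mul_re, Complex.mul_im, Complex.add_re, Complex.add_im,
      Complex.cos_ofReal_re, Complex.sin_ofReal_re]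

lemma coeff_bound (b : ℝ) (hb : 0 < b) (c : ℝ) (hc : 0 ≤ c) (k : ℕ) :
    b * (c^k/(4^k*((k !:ℝ))^2) * (2*π) / (2*π)) * ((k ! :ℝ) / ∏ i ∈ Finset.range (k+1), (b+i))
      ≤ (c/(2*(1+2*b)))^k / k ! := by
  have hπ : (2*π) ≠ 0 := by positivity
  have hk : (0:ℝ) < k ! := by positivity
  have hP' : (0:ℝ) < ∏ i ∈ Finset.range k, (b+(i:ℝ)+1) :=
    Finset.prod_pos fun i _ => by positivity
  have hPsplit : ∏ i ∈ Finset.range (k+1), (b+(i:ℝ))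
      = (∏ i ∈ Finset.range k, (b+(i:ℝ)+1)) * b := by
    have h1 := Finset.prod_range_succ' (fun i : ℕ => (b+(i:ℝ))) k
    have h2 : ∏ i ∈ Finset.range k, (b+((i:ℕ)+1:ℕ):ℝ) = ∏ i ∈ Finset.range k, (b+(i:ℝ)+1) :=
      Finset.prod_congr rfl fun i _ => by push_cast; ring
    rw [h1, h2]
    norm_num
  have hLHS : b * (c^k/(4^k*((k !:ℝ))^2) * (2*π) / (2*π)) * ((k ! :ℝ) / ∏ i ∈ Finset.range (k+1), (b+i))
      = c^k / (4^k * (k !:ℝ) * ∏ i ∈ Finset.range k, (b+(i:ℝ)+1)) := by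
    rw [hPsplit]
    field_simp
  rw [hLHS, div_pow, div_div]
  have hprod : (2*(1+2*b))^k ≤ 4^k * ∏ i ∈ Finset.range k, (b+(i:ℝ)+1) := by
    calc (2*(1+2*b))^k = ∏ _i ∈ Finset.range k, (2*(1+2*b)) := by
          rw [Finset.prod_const, Finset.card_range]
      _ ≤ ∏ i ∈ Finset.range k, (4*(b+(i:ℝ)+1)) := by
          refine Finset.prod_le_prod (fun i _ => by positivity) (fun i _ => ?_)
          have : (0:ℝ) ≤ i := Nat.cast_nonneg i
          linarith
      _ = 4^k * ∏ i ∈ Finset.range k, (b+(i:ℝ)+1) := by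
          rw [Finset.prod_mul_distrib, Finset.prod_const, Finset.card_range]
  refine div_le_div_of_nonneg_left (by positivity) (by positivity) ?_
  calc (2*(1+2*b))^k * (k !:ℝ) ≤ (4^k * ∏ i ∈ Finset.range k, (b+(i:ℝ)+1)) * (k !:ℝ) := by
        gcongr
    _ = 4^k * (k !:ℝ) * ∏ i ∈ Finset.range k, (b+(i:ℝ)+1) := by ring

/-- Subgaussianity of a deformed Verblunsky coefficient `γ` of the CβE:
`E[exp(t Re γ + s Im γ)] ≤ exp((s²+t²)/(2(1+β(j+1))))` for all real `s, t`. -/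
theorem verblunsky_subgaussian (β : ℝ) (hβ : 0 < β) (j : ℕ) (s t : ℝ) :
    verblunskyExp (β * (j + 1) / 2)
        (fun γ => Real.exp (t * γ.re + s * γ.im))
      ≤ Real.exp ((s ^ 2 + t ^ 2) / (2 * (1 + β * (j + 1)))) := by
  set b : ℝ := β * (j + 1) / 2 with hbdef
  have hb : 0 < b := by positivity
  have h2π : (0:ℝ) ≤ 2*π := by positivity
  set r2 : ℝ := s^2 + t^2 with hr2def
  have hr2 : 0 ≤ r2 := by positivity
  have hrsq : Real.sqrt r2 ^ 2 = r2 := Real.sq_sqrt hr2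
  set g : ℕ → ℝ → ℝ := fun k x =>
    (r2*x)^k/(4^k*((k !:ℝ))^2) * (2*π) * (b/(2*π) * (1-x)^(b-1)) with hgdef
  -- Step A : inner integral identification
  have stepA : ∀ x ∈ Set.Icc (0:ℝ) 1,
      (∫ θ in Set.Ico (0:ℝ) (2*π),
        Real.exp (t * ((Real.sqrt x : ℂ) * Complex.exp (Complex.I * (θ:ℝ))).re
          + s * ((Real.sqrt x : ℂ) * Complex.exp (Complex.I * (θ:ℝ))).im)
          * (b/(2*π) * (1-x)^(b-1)))
      = ∑' k, g k x := by
    intro x hx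
    have hx0 : 0 ≤ x := hx.1
    have hIco : ∫ θ in Set.Ico (0:ℝ) (2*π),
        Real.exp (t * ((Real.sqrt x : ℂ) * Complex.exp (Complex.I * (θ:ℝ))).re
          + s * ((Real.sqrt x : ℂ) * Complex.exp (Complex.I * (θ:ℝ))).im)
          * (b/(2*π) * (1-x)^(b-1))
        = ∫ θ in (0:ℝ)..(2*π),
            Real.exp (t * (Real.sqrt x * Real.cos θ) + s * (Real.sqrt x * Real.sin θ))
              * (b/(2*π) * (1-x)^(b-1)) := by
      rw [integral_Ico_eq_integral_Ioo, intervalIntegral.integral_of_le h2π,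
        integral_Ioc_eq_integral_Ioo]
      refine setIntegral_congr_fun measurableSet_Ioo fun θ _ => ?_
      rw [(gamma_re_im (Real.sqrt x) θ).1, (gamma_re_im (Real.sqrt x) θ).2]
    rw [hIco, intervalIntegral.integral_mul_const]
    have hrot : ∫ θ in (0:ℝ)..(2*π),
        Real.exp (t * (Real.sqrt x * Real.cos θ) + s * (Real.sqrt x * Real.sin θ))
        = ∫ θ in (0:ℝ)..(2*π), Real.exp ((Real.sqrt r2 * Real.sqrt x) * Real.cos θ) := by
      have := rot_integral s t (Real.sqrt x)
      simpa [mul_comm, mul_left_comm, mul_assoc] using this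
    rw [hrot, ← (hasSum_inner (Real.sqrt r2 * Real.sqrt x)).tsum_eq, ← tsum_mul_right]
    refine tsum_congr fun k => ?_
    have hsq : (Real.sqrt r2 * Real.sqrt x)^2 = r2 * x := by
      rw [mul_pow, hrsq, Real.sq_sqrt hx0]
    rw [hgdef]
    simp only [hsq]
  -- rewrite the outer integral
  have hE : verblunskyExp b (fun γ => Real.exp (t * γ.re + s * γ.im))
      = ∫ x in Set.Icc (0:ℝ) 1, ∑' k, g k x := by
    rw [verblunskyExp]
    exact setIntegral_congr_fun measurableSet_Icc fun x hx => stepA x hx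
  -- integrability of each g k on [0,1]
  have hg_int : ∀ k : ℕ, IntegrableOn (g k) (Set.Icc (0:ℝ) 1) volume := by
    intro k
    have h1 : IntervalIntegrable (fun u : ℝ => u^(b-1)) volume 0 1 :=
      intervalIntegral.intervalIntegrable_rpow' (by linarith)
    have h2 := h1.comp_sub_left 1
    norm_num at h2
    have h3 : IntervalIntegrable (fun x : ℝ => x^k * (1-x)^(b-1)) volume 0 1 := by
      have := h2.symm.continuousOn_mul ((continuous_pow k).continuousOn (s := Set.uIcc 0 1))
      simpa [mul_comm] using this
    have h4 : IntervalIntegrable (g k) volume 0 1 := by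
      have h5 : g k = fun x => ((r2^k/(4^k*((k !:ℝ))^2) * (2*π)) * (b/(2*π))) * (x^k * (1-x)^(b-1)) := by
        funext x
        rw [hgdef]
        simp only [mul_pow]
        ring
      rw [h5]
      exact h3.const_mul _
    rw [integrableOn_Icc_iff_integrableOn_Ioc]
    exact (intervalIntegrable_iff_integrableOn_Ioc_of_le (by norm_num)).mp h4
  -- value of the integral of g k
  have hg_val : ∀ k : ℕ, ∫ x in Set.Icc (0:ℝ) 1, g k x
      = b * (r2^k/(4^k*((k !:ℝ))^2) * (2*π) / (2*π))
          * ((k ! :ℝ) / ∏ i ∈ Finset.range (k+1), (b+i)) := by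
    intro k
    rw [integral_Icc_eq_integral_Ioc, ← intervalIntegral.integral_of_le (by norm_num : (0:ℝ) ≤ 1)]
    have h5 : ∀ x : ℝ, g k x = ((r2^k/(4^k*((k !:ℝ))^2) * (2*π)) * (b/(2*π))) * (x^k * (1-x)^(b-1)) := by
      intro x
      rw [hgdef]
      simp only [mul_pow]
      ring
    rw [intervalIntegral.integral_congr (fun x _ => h5 x), intervalIntegral.integral_const_mul,
      moment_int b hb k]
    ring
  -- nonnegativity of g k on [0,1]
  have hg_nonneg : ∀ k : ℕ, ∀ x ∈ Set.Icc (0:ℝ) 1, 0 ≤ g k x := by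
    intro k x hx
    have h1 : 0 ≤ (1-x)^(b-1) := Real.rpow_nonneg (by linarith [hx.2]) _
    have h2 : 0 ≤ (r2*x)^k := pow_nonneg (mul_nonneg hr2 hx.1) _
    rw [hgdef]
    have hπ : (0:ℝ) < π := Real.pi_pos
    positivity
  have hg_norm_val : ∀ k : ℕ, ∫ x in Set.Icc (0:ℝ) 1, ‖g k x‖
      = ∫ x in Set.Icc (0:ℝ) 1, g k x := by
    intro k
    exact setIntegral_congr_fun measurableSet_Icc fun x hx => norm_of_nonneg (hg_nonneg k x hx)
  have hbound : ∀ k : ℕ, ∫ x in Set.Icc (0:ℝ) 1, g k x ≤ (r2/(2*(1+2*b)))^k / k ! := by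
    intro k
    rw [hg_val k]
    exact coeff_bound b hb r2 hr2 k
  have hsummable_maj : Summable (fun k : ℕ => (r2/(2*(1+2*b)))^k / k !) :=
    Real.summable_pow_div_factorial _
  have hg_norm_sum : Summable fun k : ℕ => ∫ x in Set.Icc (0:ℝ) 1, ‖g k x‖ := by
    refine Summable.of_nonneg_of_le (fun k => integral_nonneg fun x => norm_nonneg _)
      (fun k => ?_) hsummable_maj
    rw [hg_norm_val k]
    exact hbound k
  have hinterchange := integral_tsum_of_summable_integral_norm (fun k => hg_int k) hg_norm_sum
  rw [hE, ← hinterchange]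
  -- final comparison
  have hsum_le : ∑' k, ∫ x in Set.Icc (0:ℝ) 1, g k x
      ≤ ∑' k : ℕ, (r2/(2*(1+2*b)))^k / k ! := by
    refine Summable.tsum_le_tsum hbound ?_ hsummable_maj
    refine Summable.congr hg_norm_sum fun k => hg_norm_val k
  refine le_trans hsum_le ?_
  have hexp : Real.exp (r2/(2*(1+2*b))) = ∑' k : ℕ, (r2/(2*(1+2*b)))^k / k ! := by
    rw [Real.exp_eq_exp_ℝ, NormedSpace.exp_eq_tsum_div]
  rw [← hexp]
  have harg : r2/(2*(1+2*b)) = (s ^ 2 + t ^ 2) / (2 * (1 + β * (j + 1))) := by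
    rw [hr2def, hbdef]
    ring_nf
  rw [harg]
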